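/- arXiv:1112.2068 — 2 statements merged into one kernel-verified Lean document; each statement's English description precedes it below -/
import Mathlib

section
/- If G₁ is a graph of order n₁ and G₂ is a graph of order n₂ with maximum degree Δ₂, then for every k, φ_k^d(G₁ □ G₂) ≥ n₂ · φ_{k−Δ₂}^d(G₁), where φ_k^d denotes the maximum cardinality of a defensive k-alliance free set. -/
open Classical

/-- Number of neighbors of `v` inside `S`. -/
noncomputable def dS {V : Type*} (G : SimpleGraph V) (S : Set V) (v : V) : ℕ :=
  {u ∈ S | G.Adj v u}.ncard

/-- `S` is a defensive `k`-alliance. -/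
def IsDefAlliance {V : Type*} (G : SimpleGraph V) (k : ℤ) (S : Set V) : Prop :=
  S.Nonempty ∧ ∀ v ∈ S, (dS G S v : ℤ) ≥ (dS G Sᶜ v : ℤ) + k

/-- `X` is a defensive `k`-alliance free set. -/
def IsDafFree {V : Type*} (G : SimpleGraph V) (k : ℤ) (X : Set V) : Prop :=
  ∀ S : Set V, S ⊆ X → ¬ IsDefAlliance G k S

/-- Boundary: vertices outside `S` with a neighbor in `S`. -/
def obdry {V : Type*} (G : SimpleGraph V) (S : Set V) : Set V :=
  {v | v ∉ S ∧ ∃ u ∈ S, G.Adj v u}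

/-- `S` is an offensive `k`-alliance. -/
def IsOffAlliance {V : Type*} (G : SimpleGraph V) (k : ℤ) (S : Set V) : Prop :=
  S.Nonempty ∧ ∀ v ∈ obdry G S, (dS G S v : ℤ) ≥ (dS G Sᶜ v : ℤ) + k

/-- `X` is an offensive `k`-alliance free set. -/
def IsOafFree {V : Type*} (G : SimpleGraph V) (k : ℤ) (X : Set V) : Prop :=
  ∀ S : Set V, S ⊆ X → ¬ IsOffAlliance G k S

/-- `S` is a powerful `k`-alliance. -/
def IsPowAlliance {V : Type*} (G : SimpleGraph V) (k : ℤ) (S : Set V) : Prop :=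
  IsDefAlliance G k S ∧ IsOffAlliance G (k + 2) S

/-- `X` is a powerful `k`-alliance free set. -/
def IsPafFree {V : Type*} (G : SimpleGraph V) (k : ℤ) (X : Set V) : Prop :=
  ∀ S : Set V, S ⊆ X → ¬ IsPowAlliance G k S

/-- Maximum cardinality of a defensive `k`-alliance free set. -/
noncomputable def phiD {V : Type*} (G : SimpleGraph V) (k : ℤ) : ℕ :=
  sSup {n : ℕ | ∃ X : Set V, IsDafFree G k X ∧ X.ncard = n}

/-- Maximum cardinality of an offensive `k`-alliance free set. -/
noncomputable def phiO {V : Type*} (G : SimpleGraph V) (k : ℤ) : ℕ :=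
  sSup {n : ℕ | ∃ X : Set V, IsOafFree G k X ∧ X.ncard = n}

/-- Maximum cardinality of a powerful `k`-alliance free set. -/
noncomputable def phiP {V : Type*} (G : SimpleGraph V) (k : ℤ) : ℕ :=
  sSup {n : ℕ | ∃ X : Set V, IsPafFree G k X ∧ X.ncard = n}

lemma dS_boxProd {V₁ V₂ : Type*} [Fintype V₁] [Fintype V₂]
    (G₁ : SimpleGraph V₁) (G₂ : SimpleGraph V₂) (S : Set (V₁ × V₂)) (a : V₁) (b : V₂) :
    dS (G₁.boxProd G₂) S (a, b) =
      dS G₁ {c | (c, b) ∈ S} a + dS G₂ {d | (a, d) ∈ S} b := by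
  unfold dS
  have hset : {u ∈ S | (G₁.boxProd G₂).Adj (a, b) u} =
      ((fun c => (c, b)) '' {c ∈ {c | (c, b) ∈ S} | G₁.Adj a c}) ∪
      ((fun d => (a, d)) '' {d ∈ {d | (a, d) ∈ S} | G₂.Adj b d}) := by
    ext ⟨c, d⟩
    simp only [SimpleGraph.boxProd_adj, Set.mem_setOf_eq, Set.mem_sep_iff, Set.mem_union,
      Set.mem_image, Prod.mk.injEq]
    constructor
    · rintro ⟨hS, (⟨h1, rfl⟩ | ⟨h2, rfl⟩)⟩
      · exact Or.inl ⟨c, ⟨hS, h1⟩, rfl, rfl⟩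
      · exact Or.inr ⟨d, ⟨hS, h2⟩, rfl, rfl⟩
    · rintro (⟨c', ⟨hS, h1⟩, rfl, rfl⟩ | ⟨d', ⟨hS, h2⟩, rfl, rfl⟩)
      · exact ⟨hS, Or.inl ⟨h1, rfl⟩⟩
      · exact ⟨hS, Or.inr ⟨h2, rfl⟩⟩
  rw [hset, Set.ncard_union_eq, Set.ncard_image_of_injective _ (fun x y h => (Prod.mk.injEq _ _ _ _ ▸ h).1),
    Set.ncard_image_of_injective _ (fun x y h => (Prod.mk.injEq _ _ _ _ ▸ h).2)]
  rw [Set.disjoint_left]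
  rintro ⟨c, d⟩ ⟨c', ⟨_, h1⟩, heq⟩ ⟨d', ⟨_, h2⟩, heq2⟩
  obtain ⟨rfl, rfl⟩ := Prod.mk.injEq .. ▸ heq
  obtain ⟨rfl, rfl⟩ := Prod.mk.injEq .. ▸ heq2
  exact G₂.irrefl h2

lemma dS_split {V : Type*} [Fintype V] (G : SimpleGraph V) [DecidableRel G.Adj]
    (T : Set V) (b : V) : dS G T b + dS G Tᶜ b ≤ G.maxDegree := by
  unfold dS
  rw [← Set.ncard_union_eq (by
    rw [Set.disjoint_left]; rintro x ⟨hx, _⟩ ⟨hx', _⟩; exact hx' hx)]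
  calc ({u ∈ T | G.Adj b u} ∪ {u ∈ Tᶜ | G.Adj b u}).ncard
      ≤ (G.neighborSet b).ncard := by
        apply Set.ncard_le_ncard _ (Set.toFinite _)
        rintro x (⟨_, h⟩ | ⟨_, h⟩) <;> exact h
    _ = G.degree b := by
        rw [Set.ncard_eq_toFinset_card']; simp [SimpleGraph.neighborFinset, SimpleGraph.degree]
    _ ≤ G.maxDegree := G.degree_le_maxDegree b

lemma daf_prod {V₁ V₂ : Type*} [Fintype V₁] [Fintype V₂]
    (G₁ : SimpleGraph V₁) (G₂ : SimpleGraph V₂) [DecidableRel G₂.Adj] (k : ℤ)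
    {X : Set V₁} (hX : IsDafFree G₁ (k - (G₂.maxDegree : ℤ)) X) :
    IsDafFree (G₁.boxProd G₂) k (X ×ˢ (Set.univ : Set V₂)) := by
  rintro S hS ⟨⟨⟨a, b⟩, hab⟩, hall⟩
  refine hX {c | (c, b) ∈ S} (fun c hc => (hS hc).1) ⟨⟨a, hab⟩, fun c hc => ?_⟩
  have h := hall (c, b) hc
  rw [dS_boxProd, dS_boxProd] at h
  have hsl : {c' | (c', b) ∈ Sᶜ} = {c' | (c', b) ∈ S}ᶜ := rfl
  have hsl2 : {d | (c, d) ∈ Sᶜ} = {d | (c, d) ∈ S}ᶜ := rfl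
  rw [hsl, hsl2] at h
  have hd := dS_split G₂ {d | (c, d) ∈ S} b
  push_cast at h ⊢
  omega


theorem stmt5 {V₁ V₂ : Type*} [Fintype V₁] [Fintype V₂]
    (G₁ : SimpleGraph V₁) (G₂ : SimpleGraph V₂) [DecidableRel G₂.Adj] (k : ℤ) :
    phiD (G₁.boxProd G₂) k ≥ Fintype.card V₂ * phiD G₁ (k - (G₂.maxDegree : ℤ)) := by
  -- attain phiD G₁
  set k' := k - (G₂.maxDegree : ℤ)
  have hmem : phiD G₁ k' ∈ {n : ℕ | ∃ X : Set V₁, IsDafFree G₁ k' X ∧ X.ncard = n} := by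
    apply Nat.sSup_mem
    · exact ⟨0, ∅, fun S hS h => h.1.ne_empty (Set.subset_empty_iff.mp hS), Set.ncard_empty _⟩
    · exact ⟨Fintype.card V₁, fun n ⟨X, _, hn⟩ => hn ▸ Set.ncard_le_ncard (Set.subset_univ X)
        (Set.toFinite _) |>.trans (by simp [Set.ncard_univ])⟩
  obtain ⟨X, hX, hcard⟩ := hmem
  have hfree := daf_prod G₁ G₂ k hX
  have hcard2 : (X ×ˢ (Set.univ : Set V₂)).ncard = Fintype.card V₂ * phiD G₁ k' := by
    rw [Set.ncard_eq_toFinset_card', Set.toFinset_prod, Finset.card_product]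
    simp [Set.ncard_eq_toFinset_card' X] at hcard
    simp [hcard, Nat.mul_comm]
  apply le_csSup
  · exact ⟨Fintype.card (V₁ × V₂), fun n ⟨Y, _, hn⟩ => hn ▸ (Set.ncard_le_ncard
      (Set.subset_univ Y) (Set.toFinite _)).trans (by simp [Set.ncard_univ])⟩
  · exact ⟨X ×ˢ Set.univ, hfree, hcard2⟩
end

section
/- Let G₁, G₂ be graphs with minimum degrees δ₁, δ₂ and S ⊆ V₁ × V₂. If the projection of S onto V_i is a powerful k_i-alliance free set in G_i for each i ∈ {1,2}, then S is a powerful k-alliance free set in G₁ □ G₂ for k = max{k₁ + k₂ − 1, min{k₂ − δ₁, k₁ − δ₂}}. -/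
open Classical

/- ### Auxiliary lemmas -/

lemma dS_mono {V : Type*} [Finite V] (G : SimpleGraph V) {S T : Set V} (h : S ⊆ T) (v : V) :
    dS G S v ≤ dS G T v :=
  Set.ncard_le_ncard (fun u hu => ⟨h hu.1, hu.2⟩) (Set.toFinite _)

lemma dS_empty {V : Type*} (G : SimpleGraph V) (v : V) : dS G (∅ : Set V) v = 0 := by
  simp [dS]

lemma dS_add_compl {V : Type*} [Fintype V] (G : SimpleGraph V) [DecidableRel G.Adj]
    (S : Set V) (v : V) : dS G S v + dS G Sᶜ v = G.degree v := by
  have hU : {u ∈ S | G.Adj v u} ∪ {u ∈ Sᶜ | G.Adj v u} = G.neighborSet v := by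
    ext u
    by_cases hu : u ∈ S <;> simp [SimpleGraph.mem_neighborSet, hu]
  have hd : Disjoint {u ∈ S | G.Adj v u} {u ∈ Sᶜ | G.Adj v u} := by
    rw [Set.disjoint_left]; rintro u ⟨hu, -⟩ ⟨hu', -⟩; exact hu' hu
  have h := Set.ncard_union_eq hd (Set.toFinite _) (Set.toFinite _)
  rw [hU] at h
  rw [dS, dS, ← h, ← Nat.card_coe_set_eq, Nat.card_eq_fintype_card,
    SimpleGraph.card_neighborSet_eq_degree]

lemma dS_box {V₁ V₂ : Type*} [Finite V₁] [Finite V₂]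
    (G₁ : SimpleGraph V₁) (G₂ : SimpleGraph V₂)
    (T : Set (V₁ × V₂)) (u : V₁) (v : V₂) :
    dS (G₁.boxProd G₂) T (u, v)
      = dS G₁ {a | (a, v) ∈ T} u + dS G₂ {b | (u, b) ∈ T} v := by
  have hU : {p ∈ T | (G₁.boxProd G₂).Adj (u, v) p}
      = ((fun a => (a, v)) '' {a ∈ {a | (a, v) ∈ T} | G₁.Adj u a})
        ∪ ((fun b => (u, b)) '' {b ∈ {b | (u, b) ∈ T} | G₂.Adj v b}) := by
    ext ⟨a, b⟩
    simp only [Set.mem_sep_iff, SimpleGraph.boxProd_adj, Set.mem_union, Set.mem_image,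
      Set.mem_setOf_eq, Prod.mk.injEq]
    constructor
    · rintro ⟨hT, ⟨hadj, rfl⟩ | ⟨hadj, rfl⟩⟩
      · exact Or.inl ⟨a, ⟨hT, hadj⟩, rfl, rfl⟩
      · exact Or.inr ⟨b, ⟨hT, hadj⟩, rfl, rfl⟩
    · rintro (⟨a', ⟨hT, hadj⟩, rfl, rfl⟩ | ⟨b', ⟨hT, hadj⟩, rfl, rfl⟩)
      · exact ⟨hT, Or.inl ⟨hadj, rfl⟩⟩
      · exact ⟨hT, Or.inr ⟨hadj, rfl⟩⟩
  have hd : Disjoint ((fun a => (a, v)) '' {a ∈ {a | (a, v) ∈ T} | G₁.Adj u a})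
      ((fun b => (u, b)) '' {b ∈ {b | (u, b) ∈ T} | G₂.Adj v b}) := by
    rw [Set.disjoint_left]
    rintro ⟨a, b⟩ ⟨a', ⟨-, hadj⟩, heq⟩ ⟨b', ⟨-, -⟩, heq'⟩
    obtain ⟨rfl, rfl⟩ := Prod.mk.injEq .. ▸ heq
    obtain ⟨rfl, -⟩ := Prod.mk.injEq .. ▸ heq'
    exact G₁.irrefl hadj
  have inj1 : Function.Injective (fun a : V₁ => (a, v)) := fun x y h => by
    simpa using h
  have inj2 : Function.Injective (fun b : V₂ => (u, b)) := fun x y h => by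
    simpa using h
  rw [dS, hU, Set.ncard_union_eq hd (Set.toFinite _) (Set.toFinite _),
    Set.ncard_image_of_injective _ inj1, Set.ncard_image_of_injective _ inj2]
  rfl

lemma row_compl {V₁ V₂ : Type*} (T : Set (V₁ × V₂)) (v : V₂) :
    {a | (a, v) ∈ Tᶜ} = {a | (a, v) ∈ T}ᶜ := rfl

lemma col_compl {V₁ V₂ : Type*} (T : Set (V₁ × V₂)) (u : V₁) :
    {b | (u, b) ∈ Tᶜ} = {b | (u, b) ∈ T}ᶜ := rfl

/-- Core lemma: if `k ≥ k₁ + k₂ - 1` and `k ≥ k₂ - δ₁`, no subset of `S` is a powerful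
`k`-alliance in the box product. -/
lemma key₂ {V₁ V₂ : Type*} [Fintype V₁] [Fintype V₂] [Nonempty V₁]
    (G₁ : SimpleGraph V₁) (G₂ : SimpleGraph V₂)
    [DecidableRel G₁.Adj] [DecidableRel G₂.Adj]
    (k k₁ k₂ : ℤ) (S T : Set (V₁ × V₂))
    (h₁ : IsPafFree G₁ k₁ (Prod.fst '' S))
    (h₂ : IsPafFree G₂ k₂ (Prod.snd '' S))
    (hk1 : k₁ + k₂ - 1 ≤ k) (hk2 : k₂ - (G₁.minDegree : ℤ) ≤ k)
    (hTS : T ⊆ S) : ¬ IsPowAlliance (G₁.boxProd G₂) k T := by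
  rintro ⟨⟨hTne, hdef⟩, ⟨-, hoff⟩⟩
  set S₂ : Set V₂ := Prod.snd '' T with hS₂def
  have hS₂sub : S₂ ⊆ Prod.snd '' S := Set.image_mono hTS
  have hS₂ne : S₂.Nonempty := hTne.image _
  -- factored forms of the defensive and offensive conditions on `T`
  have hbox : ∀ u v, (u, v) ∈ T →
      2 * (dS G₁ {a | (a, v) ∈ T} u : ℤ) + 2 * (dS G₂ {b | (u, b) ∈ T} v : ℤ)
        ≥ (G₁.degree u : ℤ) + (G₂.degree v : ℤ) + k := by
    intro u v huv
    have h := hdef (u, v) huv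
    have e1 := dS_add_compl G₁ {a | (a, v) ∈ T} u
    have e2 := dS_add_compl G₂ {b | (u, b) ∈ T} v
    have s1 := dS_box G₁ G₂ T u v
    have s2 := dS_box G₁ G₂ Tᶜ u v
    rw [row_compl, col_compl] at s2
    omega
  have hboxoff : ∀ u v, (u, v) ∈ obdry (G₁.boxProd G₂) T →
      2 * (dS G₁ {a | (a, v) ∈ T} u : ℤ) + 2 * (dS G₂ {b | (u, b) ∈ T} v : ℤ)
        ≥ (G₁.degree u : ℤ) + (G₂.degree v : ℤ) + k + 2 := by
    intro u v huv
    have h := hoff (u, v) huv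
    have e1 := dS_add_compl G₁ {a | (a, v) ∈ T} u
    have e2 := dS_add_compl G₂ {b | (u, b) ∈ T} v
    have s1 := dS_box G₁ G₂ T u v
    have s2 := dS_box G₁ G₂ Tᶜ u v
    rw [row_compl, col_compl] at s2
    omega
  have hcol : ∀ u v, dS G₂ {b | (u, b) ∈ T} v ≤ dS G₂ S₂ v := fun u v =>
    dS_mono G₂ (fun b hb => show b ∈ Prod.snd '' T from ⟨(u, b), hb, rfl⟩) v
  -- the projection onto the second factor is defensive
  have hdefS₂ : ∀ v ∈ S₂, 2 * (dS G₂ S₂ v : ℤ) ≥ (G₂.degree v : ℤ) + k₂ := by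
    intro v hv
    by_contra hbad
    push_neg at hbad
    obtain ⟨p, hp, rfl⟩ := hv
    have hRsub : {a | (a, p.2) ∈ T} ⊆ Prod.fst '' S := fun a ha => ⟨(a, p.2), hTS ha, rfl⟩
    have hRne : {a | (a, p.2) ∈ T}.Nonempty := ⟨p.1, hp⟩
    refine h₁ {a | (a, p.2) ∈ T} hRsub ⟨⟨hRne, ?_⟩, ⟨hRne, ?_⟩⟩
    · intro u hu
      have h1 := hbox u p.2 hu
      have h2 := hcol u p.2
      have e := dS_add_compl G₁ {a | (a, p.2) ∈ T} u
      omega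
    · rintro u' ⟨hnot, u, huR, hadj⟩
      have hmem : (u', p.2) ∈ obdry (G₁.boxProd G₂) T :=
        ⟨hnot, ⟨(u, p.2), huR, Or.inl ⟨hadj, rfl⟩⟩⟩
      have h1 := hboxoff u' p.2 hmem
      have h2 := hcol u' p.2
      have e := dS_add_compl G₁ {a | (a, p.2) ∈ T} u'
      omega
  -- the projection onto the second factor is offensive
  have hoffS₂ : ∀ v ∈ obdry G₂ S₂, (dS G₂ S₂ v : ℤ) ≥ (dS G₂ S₂ᶜ v : ℤ) + (k₂ + 2) := by
    rintro v ⟨hvnot, v', hv', hadj⟩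
    obtain ⟨⟨u, b⟩, hp, rfl⟩ := hv'
    have hmem : (u, v) ∈ obdry (G₁.boxProd G₂) T :=
      ⟨fun hin => hvnot ⟨(u, v), hin, rfl⟩, ⟨(u, b), hp, Or.inr ⟨hadj, rfl⟩⟩⟩
    have h1 := hboxoff u v hmem
    have hA : dS G₁ {a | (a, v) ∈ T} u = 0 := by
      have : {a | (a, v) ∈ T} = (∅ : Set V₁) := by
        ext a
        simp only [Set.mem_setOf_eq, Set.mem_empty_iff_false, iff_false]
        exact fun h => hvnot ⟨(a, v), h, rfl⟩
      rw [this, dS_empty]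
    have h2 := hcol u v
    have hδ : (G₁.minDegree : ℤ) ≤ (G₁.degree u : ℤ) := by
      exact_mod_cast G₁.minDegree_le_degree u
    have e := dS_add_compl G₂ S₂ v
    omega
  refine h₂ S₂ hS₂sub ⟨⟨hS₂ne, ?_⟩, ⟨hS₂ne, hoffS₂⟩⟩
  intro v hv
  have h1 := hdefS₂ v hv
  have e := dS_add_compl G₂ S₂ v
  omega

/-- Mirrored core lemma: if `k ≥ k₁ + k₂ - 1` and `k ≥ k₁ - δ₂`, no subset of `S` is a
powerful `k`-alliance in the box product. -/
lemma key₁ {V₁ V₂ : Type*} [Fintype V₁] [Fintype V₂] [Nonempty V₂]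
    (G₁ : SimpleGraph V₁) (G₂ : SimpleGraph V₂)
    [DecidableRel G₁.Adj] [DecidableRel G₂.Adj]
    (k k₁ k₂ : ℤ) (S T : Set (V₁ × V₂))
    (h₁ : IsPafFree G₁ k₁ (Prod.fst '' S))
    (h₂ : IsPafFree G₂ k₂ (Prod.snd '' S))
    (hk1 : k₁ + k₂ - 1 ≤ k) (hk2 : k₁ - (G₂.minDegree : ℤ) ≤ k)
    (hTS : T ⊆ S) : ¬ IsPowAlliance (G₁.boxProd G₂) k T := by
  rintro ⟨⟨hTne, hdef⟩, ⟨-, hoff⟩⟩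
  set S₁ : Set V₁ := Prod.fst '' T with hS₁def
  have hS₁sub : S₁ ⊆ Prod.fst '' S := Set.image_mono hTS
  have hS₁ne : S₁.Nonempty := hTne.image _
  have hbox : ∀ u v, (u, v) ∈ T →
      2 * (dS G₁ {a | (a, v) ∈ T} u : ℤ) + 2 * (dS G₂ {b | (u, b) ∈ T} v : ℤ)
        ≥ (G₁.degree u : ℤ) + (G₂.degree v : ℤ) + k := by
    intro u v huv
    have h := hdef (u, v) huv
    have e1 := dS_add_compl G₁ {a | (a, v) ∈ T} u
    have e2 := dS_add_compl G₂ {b | (u, b) ∈ T} v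
    have s1 := dS_box G₁ G₂ T u v
    have s2 := dS_box G₁ G₂ Tᶜ u v
    rw [row_compl, col_compl] at s2
    omega
  have hboxoff : ∀ u v, (u, v) ∈ obdry (G₁.boxProd G₂) T →
      2 * (dS G₁ {a | (a, v) ∈ T} u : ℤ) + 2 * (dS G₂ {b | (u, b) ∈ T} v : ℤ)
        ≥ (G₁.degree u : ℤ) + (G₂.degree v : ℤ) + k + 2 := by
    intro u v huv
    have h := hoff (u, v) huv
    have e1 := dS_add_compl G₁ {a | (a, v) ∈ T} u
    have e2 := dS_add_compl G₂ {b | (u, b) ∈ T} v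
    have s1 := dS_box G₁ G₂ T u v
    have s2 := dS_box G₁ G₂ Tᶜ u v
    rw [row_compl, col_compl] at s2
    omega
  have hrow : ∀ u v, dS G₁ {a | (a, v) ∈ T} u ≤ dS G₁ S₁ u := fun u v =>
    dS_mono G₁ (fun a ha => show a ∈ Prod.fst '' T from ⟨(a, v), ha, rfl⟩) u
  have hdefS₁ : ∀ u ∈ S₁, 2 * (dS G₁ S₁ u : ℤ) ≥ (G₁.degree u : ℤ) + k₁ := by
    intro u hu
    by_contra hbad
    push_neg at hbad
    obtain ⟨p, hp, rfl⟩ := hu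
    have hCsub : {b | (p.1, b) ∈ T} ⊆ Prod.snd '' S := fun b hb => ⟨(p.1, b), hTS hb, rfl⟩
    have hCne : {b | (p.1, b) ∈ T}.Nonempty := ⟨p.2, hp⟩
    refine h₂ {b | (p.1, b) ∈ T} hCsub ⟨⟨hCne, ?_⟩, ⟨hCne, ?_⟩⟩
    · intro v hv
      have h1 := hbox p.1 v hv
      have h2 := hrow p.1 v
      have e := dS_add_compl G₂ {b | (p.1, b) ∈ T} v
      omega
    · rintro v' ⟨hnot, v, hvC, hadj⟩
      have hmem : (p.1, v') ∈ obdry (G₁.boxProd G₂) T :=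
        ⟨hnot, ⟨(p.1, v), hvC, Or.inr ⟨hadj, rfl⟩⟩⟩
      have h1 := hboxoff p.1 v' hmem
      have h2 := hrow p.1 v'
      have e := dS_add_compl G₂ {b | (p.1, b) ∈ T} v'
      omega
  have hoffS₁ : ∀ u ∈ obdry G₁ S₁, (dS G₁ S₁ u : ℤ) ≥ (dS G₁ S₁ᶜ u : ℤ) + (k₁ + 2) := by
    rintro u ⟨hunot, u', hu', hadj⟩
    obtain ⟨⟨a, b⟩, hp, rfl⟩ := hu'
    have hmem : (u, b) ∈ obdry (G₁.boxProd G₂) T :=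
      ⟨fun hin => hunot ⟨(u, b), hin, rfl⟩, ⟨(a, b), hp, Or.inl ⟨hadj, rfl⟩⟩⟩
    have h1 := hboxoff u b hmem
    have hB : dS G₂ {b' | (u, b') ∈ T} b = 0 := by
      have : {b' | (u, b') ∈ T} = (∅ : Set V₂) := by
        ext b'
        simp only [Set.mem_setOf_eq, Set.mem_empty_iff_false, iff_false]
        exact fun h => hunot ⟨(u, b'), h, rfl⟩
      rw [this, dS_empty]
    have h2 := hrow u b
    have hδ : (G₂.minDegree : ℤ) ≤ (G₂.degree b : ℤ) := by
      exact_mod_cast G₂.minDegree_le_degree b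
    have e := dS_add_compl G₁ S₁ u
    omega
  refine h₁ S₁ hS₁sub ⟨⟨hS₁ne, ?_⟩, ⟨hS₁ne, hoffS₁⟩⟩
  intro u hu
  have h1 := hdefS₁ u hu
  have e := dS_add_compl G₁ S₁ u
  omega

theorem stmt18 {V₁ V₂ : Type*} [Fintype V₁] [Fintype V₂] [Nonempty V₁] [Nonempty V₂]
    (G₁ : SimpleGraph V₁) (G₂ : SimpleGraph V₂)
    [DecidableRel G₁.Adj] [DecidableRel G₂.Adj]
    (k₁ k₂ : ℤ) (S : Set (V₁ × V₂))
    (h₁ : IsPafFree G₁ k₁ (Prod.fst '' S))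
    (h₂ : IsPafFree G₂ k₂ (Prod.snd '' S)) :
    IsPafFree (G₁.boxProd G₂)
      (max (k₁ + k₂ - 1) (min (k₂ - (G₁.minDegree : ℤ)) (k₁ - (G₂.minDegree : ℤ)))) S := by
  intro T hTS
  have hk1 : k₁ + k₂ - 1
      ≤ max (k₁ + k₂ - 1) (min (k₂ - (G₁.minDegree : ℤ)) (k₁ - (G₂.minDegree : ℤ))) :=
    le_max_left _ _
  rcases le_total (k₂ - (G₁.minDegree : ℤ)) (k₁ - (G₂.minDegree : ℤ)) with h | h
  · have hk2 : k₂ - (G₁.minDegree : ℤ)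
        ≤ max (k₁ + k₂ - 1) (min (k₂ - (G₁.minDegree : ℤ)) (k₁ - (G₂.minDegree : ℤ))) := by
      calc k₂ - (G₁.minDegree : ℤ)
          = min (k₂ - (G₁.minDegree : ℤ)) (k₁ - (G₂.minDegree : ℤ)) := (min_eq_left h).symm
        _ ≤ _ := le_max_right _ _
    exact key₂ G₁ G₂ _ k₁ k₂ S T h₁ h₂ hk1 hk2 hTS
  · have hk2 : k₁ - (G₂.minDegree : ℤ)
        ≤ max (k₁ + k₂ - 1) (min (k₂ - (G₁.minDegree : ℤ)) (k₁ - (G₂.minDegree : ℤ))) := by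
      calc k₁ - (G₂.minDegree : ℤ)
          = min (k₂ - (G₁.minDegree : ℤ)) (k₁ - (G₂.minDegree : ℤ)) := (min_eq_right h).symm
        _ ≤ _ := le_max_right _ _
    exact key₁ G₁ G₂ _ k₁ k₂ S T h₁ h₂ hk1 hk2 hTS
end
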